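/- Let (x_n)_{n∈I} be a frame for H with canonical dual (y_n)_{n∈I}, and E = {1,...,k} ⊊ I a finite set satisfying the MRC for (x_n). Then the k×k matrix A_E with entries (A_E)_{mi} = ⟨y_i, x_m⟩ − δ_{mi} is invertible. -/

import Mathlib

noncomputable section

variable {H : Type*} [NormedAddCommGroup H] [InnerProductSpace ℂ H] [CompleteSpace H]

/-- `(x n)_{n ∈ I}` is a frame for `H` with frame bounds `A`, `B`. -/
def IsFrameOn (x : ℕ → H) (I : Set ℕ) (A B : ℝ) : Prop :=
  0 < A ∧ 0 < B ∧ ∀ h : H,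
    Summable (fun n : I => ‖(inner ℂ (x n) h : ℂ)‖ ^ 2) ∧
    A * ‖h‖ ^ 2 ≤ ∑' n : I, ‖(inner ℂ (x n) h : ℂ)‖ ^ 2 ∧
    ∑' n : I, ‖(inner ℂ (x n) h : ℂ)‖ ^ 2 ≤ B * ‖h‖ ^ 2

/-- `(y n)_{n ∈ I}` is the canonical dual of `(x n)_{n ∈ I}`. -/
def IsCanonicalDualOn (y x : ℕ → H) (I : Set ℕ) : Prop :=
  ∃ S Sinv : H →L[ℂ] H,
    (∀ h : H, HasSum (fun n : I => (inner ℂ (x n) h : ℂ) • x n) (S h)) ∧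
    Sinv.comp S = ContinuousLinearMap.id ℂ H ∧
    S.comp Sinv = ContinuousLinearMap.id ℂ H ∧
    ∀ n ∈ I, y n = Sinv (x n)

/-- For a frame `(x n)_{n ∈ I}` with canonical dual `(y n)` and a set
`E = {1,…,k} ⊊ I` satisfying the MRC, the `k×k` matrix with entries
`⟨y i, x m⟩ − δ_{m i}` is invertible.  (Here `⟨a, b⟩` denotes the inner product,
linear in the first argument, so `⟨y i, x m⟩ = ⟪x m, y i⟫` in Mathlib's convention.) -/
theorem stmt5 (x y : ℕ → H) (I : Set ℕ) (A B : ℝ) (hx : IsFrameOn x I A B)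
    (hy : IsCanonicalDualOn y x I) (k : ℕ)
    (hE : ((Finset.Icc 1 k : Finset ℕ) : Set ℕ) ⊂ I)
    (hMRC : Dense ((Submodule.span ℂ
      (x '' (I \ (Finset.Icc 1 k : Finset ℕ))) : Submodule ℂ H) : Set H)) :
    IsUnit (Matrix.of (fun m i : Fin k =>
      (inner ℂ (x ((m : ℕ) + 1)) (y ((i : ℕ) + 1)) : ℂ) - if m = i then 1 else 0)) := by
  obtain ⟨S, Sinv, hS, hSinvS, hSSinv, hyx⟩ := hy
  set M := Matrix.of (fun m i : Fin k =>
      (inner ℂ (x ((m : ℕ) + 1)) (y ((i : ℕ) + 1)) : ℂ) - if m = i then 1 else 0) with hM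
  -- membership of the shifted indices
  have hmemE : ∀ i : Fin k, ((i : ℕ) + 1) ∈ Finset.Icc 1 k := by
    intro i
    simp [Nat.succ_le_of_lt i.isLt]
  have hmemI : ∀ i : Fin k, ((i : ℕ) + 1) ∈ I := fun i => hE.subset (by
    simpa using hmemE i)
  rw [← Matrix.mulVec_injective_iff_isUnit]
  have key : ∀ c : Fin k → ℂ, M.mulVec c = 0 → c = 0 := by
    intro c hc
    -- the matrix relation, rewritten
    have hc' : ∀ m : Fin k, ∑ i : Fin k,
        (inner ℂ (x ((m : ℕ) + 1)) (y ((i : ℕ) + 1)) : ℂ) * c i = c m := by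
      intro m
      have h0 := congrFun hc m
      simp only [Matrix.mulVec, dotProduct, hM, Matrix.of_apply, sub_mul, ite_mul,
        one_mul, zero_mul, Finset.sum_sub_distrib, Finset.sum_ite_eq, Finset.mem_univ,
        if_true, Pi.zero_apply] at h0
      linear_combination h0
    set f : H := ∑ i : Fin k, c i • y ((i : ℕ) + 1) with hf
    have hin : ∀ m : Fin k, (inner ℂ (x ((m : ℕ) + 1)) f : ℂ) = c m := by
      intro m
      rw [hf, inner_sum]
      rw [Finset.sum_congr rfl (fun i _ => inner_smul_right _ _ _)]
      rw [Finset.sum_congr rfl (fun i _ => mul_comm (c i) _)]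
      exact hc' m
    have hSy : ∀ i : Fin k, S (y ((i : ℕ) + 1)) = x ((i : ℕ) + 1) := by
      intro i
      rw [hyx _ (hmemI i)]
      have := ContinuousLinearMap.ext_iff.mp hSSinv (x ((i : ℕ) + 1))
      simpa using this
    have hSf : S f = ∑ i : Fin k, c i • x ((i : ℕ) + 1) := by
      rw [hf, map_sum]
      exact Finset.sum_congr rfl fun i _ => by rw [map_smul, hSy]
    -- the finset of indices in `I` corresponding to `1..k`
    have hinj : Function.Injective (fun i : Fin k => (⟨(i : ℕ) + 1, hmemI i⟩ : I)) := by
      intro a b hab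
      have : (a : ℕ) + 1 = (b : ℕ) + 1 := congrArg Subtype.val hab
      exact Fin.ext (Nat.succ_injective this)
    set T : Finset I := Finset.univ.map ⟨fun i : Fin k => (⟨(i : ℕ) + 1, hmemI i⟩ : I), hinj⟩
      with hT
    have hsumT : ∑ n ∈ T, (inner ℂ (x (n : ℕ)) f : ℂ) • x (n : ℕ) = S f := by
      rw [hT, Finset.sum_map, hSf]
      exact Finset.sum_congr rfl fun i _ => by
        simp only [Function.Embedding.coeFn_mk]
        rw [hin i]
    have hcompl : HasSum
        (fun n : {n : I // n ∉ T} => (inner ℂ (x ((n : I) : ℕ)) f : ℂ) • x ((n : I) : ℕ))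
        0 := by
      refine (Finset.hasSum_compl_iff
        (f := fun n : I => (inner ℂ (x (n : ℕ)) f : ℂ) • x (n : ℕ)) T).mpr ?_
      rw [zero_add, hsumT]
      exact hS f
    have hcompl2 := hcompl.mapL (innerSL ℂ f)
    have hcompl3 : HasSum
        (fun n : {n : I // n ∉ T} => Complex.normSq (inner ℂ (x ((n : I) : ℕ)) f : ℂ)) 0 := by
      have := hcompl2.mapL Complex.reCLM
      simp only [map_zero] at this ⊢
      refine this.congr_fun fun n => ?_
      simp only [innerSL_apply_apply, inner_smul_right, ← inner_conj_symm f (x ((n : I) : ℕ))]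
      rw [Complex.mul_conj]
      simp
    have hz : ∀ n : {n : I // n ∉ T}, (inner ℂ (x ((n : I) : ℕ)) f : ℂ) = 0 := by
      have h0 := (hasSum_zero_iff_of_nonneg
        (fun n : {n : I // n ∉ T} => Complex.normSq_nonneg _)).mp hcompl3
      intro n
      have := congrFun h0 n
      simpa [Complex.normSq_eq_zero] using this
    -- MRC gives f = 0
    have horth : f ∈ (Submodule.span ℂ (x '' (I \ (Finset.Icc 1 k : Finset ℕ))))ᗮ := by
      rw [Submodule.mem_orthogonal]
      intro v hv
      induction hv using Submodule.span_induction with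
      | mem v hv =>
        obtain ⟨n, ⟨hnI, hnE⟩, rfl⟩ := hv
        have hnT : (⟨n, hnI⟩ : I) ∉ T := by
          rw [hT]
          simp only [Finset.mem_map, Finset.mem_univ, Function.Embedding.coeFn_mk, true_and,
            not_exists]
          intro i hi
          apply hnE
          have : (i : ℕ) + 1 = n := congrArg Subtype.val hi
          rw [← this]
          exact hmemE i
        exact hz ⟨⟨n, hnI⟩, hnT⟩
      | zero => simp
      | add u w _ _ hu hw => rw [inner_add_left, hu, hw, add_zero]
      | smul a u _ hu => rw [inner_smul_left, hu, mul_zero]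
    have hbot : (Submodule.span ℂ (x '' (I \ (Finset.Icc 1 k : Finset ℕ))))ᗮ = ⊥ := by
      rw [← Submodule.topologicalClosure_eq_top_iff]
      apply SetLike.ext'
      rw [Submodule.topologicalClosure_coe, hMRC.closure_eq]
      rfl
    have hf0 : f = 0 := by
      rw [hbot] at horth
      simpa using horth
    funext m
    rw [← hin m, hf0, inner_zero_right]
    rfl
  intro c d hcd
  have : M.mulVec (c - d) = 0 := by
    rw [Matrix.mulVec_sub, hcd, sub_self]
  have := key _ this
  exact sub_eq_zero.mp (by funext i; exact congrFun this i)

end
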